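/- If f is (α,β)-regular, then the map F(x) = ∇f_x(x) is (α−β)-strongly monotone on X: ⟨F(x) − F(y), x − y⟩ ≥ (α−β)‖x−y‖² for all x,y ∈ X. -/
import Mathlib


open scoped RealInnerProductSpace

/-- If `f` is `(α,β)`-regular, then `F(x) = ∇f_x(x)` is
`(α-β)`-strongly monotone on `X`. -/
theorem stmt_6
    {E : Type*} [NormedAddCommGroup E] [InnerProductSpace ℝ E] [FiniteDimensional ℝ E]
    (X : Set E) (hXne : X.Nonempty) (hXcp : IsCompact X) (hXcv : Convex ℝ X)
    (f : E → E → ℝ) (Df : E → E → E) (α β : ℝ) (hα : 0 ≤ α) (hβ : 0 ≤ β)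
    (hsc : ∀ x ∈ X, ∀ y ∈ X, ∀ z ∈ X,
      f x z + ⟪Df x z, y - z⟫ + α / 2 * ‖y - z‖ ^ 2 ≤ f x y)
    (hlip : ∀ x' ∈ X, ∀ x ∈ X, ∀ y ∈ X, ‖Df x x' - Df y x'‖ ≤ β * ‖x - y‖) :
    ∀ x ∈ X, ∀ y ∈ X, (α - β) * ‖x - y‖ ^ 2 ≤ ⟪Df x x - Df y y, x - y⟫ := by
  intro x hx y hy
  have h1 := hsc x hx y hy x hx
  have h2 := hsc x hx x hx y hy
  have hnorm : ‖y - x‖ = ‖x - y‖ := by rw [← neg_sub, norm_neg]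
  have hA : α * ‖x - y‖ ^ 2 ≤ ⟪Df x x - Df x y, x - y⟫ := by
    rw [inner_sub_left]
    have h3 : ⟪Df x x, y - x⟫ = -⟪Df x x, x - y⟫ := by
      rw [← inner_neg_right, neg_sub]
    rw [hnorm] at h1
    nlinarith [h1, h2, h3]
  have hB : ⟪Df x y - Df y y, x - y⟫ ≥ -(β * ‖x - y‖ ^ 2) := by
    have := abs_real_inner_le_norm (Df x y - Df y y) (x - y)
    have hl := hlip y hy x hx y hy
    have h4 : ⟪Df x y - Df y y, x - y⟫ ≥ -(‖Df x y - Df y y‖ * ‖x - y‖) := by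
      nlinarith [abs_le.mp this]
    nlinarith [norm_nonneg (x - y)]
  have : Df x x - Df y y = (Df x x - Df x y) + (Df x y - Df y y) := by abel
  rw [this, inner_add_left]
  nlinarith
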